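/- Nonnegativity of solution (3-18): let d1 > d2 > 0, κ = √(2/(d1 − d2)), and let β1, β2 be real constants with 1 > β1 > β2 > 0; set μ = √(1 − β1). Define u(t,x) = (1/2 + (μ/2)·tanh(μt/2))·(1 + β2·sin(κx)·exp(−d1κ²t)), v(t,x) = 1 − (1 − β1)/(2·cosh²(μt/2)·(1 + μ·tanh(μt/2))) − u(t,x), w(t,x) = β2·sin(κx)·exp(−d1κ²t)·(1 + μ·tanh(μt/2)). Then for every integer k, u(t,x) ≥ 0, v(t,x) ≥ 0 and w(t,x) ≥ 0 for all t > 0 and all x ∈ (2kπ/κ, (2k+1)π/κ). -/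

import Mathlib

open Real

lemma tanh_le_aux {y : ℝ} (hy : 0 ≤ y) : Real.tanh y ≤ (Real.exp (2 * y) - 1) / 2 := by
  have hC : 0 < Real.cosh y := Real.cosh_pos y
  rw [Real.tanh_eq_sinh_div_cosh, div_le_iff₀ hC]
  rw [Real.sinh_eq, Real.cosh_eq]
  have h2 : Real.exp (2*y) = Real.exp y * Real.exp y := by rw [← Real.exp_add]; ring_nf
  have h3 : Real.exp y * Real.exp (-y) = 1 := by rw [← Real.exp_add]; simp
  have hp : 1 ≤ Real.exp y := Real.one_le_exp hy
  nlinarith [sq_nonneg (Real.exp y * Real.exp y - 1), Real.exp_pos y, Real.exp_pos (-y)]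

lemma tanh_nonneg_aux {y : ℝ} (hy : 0 ≤ y) : 0 ≤ Real.tanh y := by
  rw [Real.tanh_eq_sinh_div_cosh]
  have : 0 ≤ Real.sinh y := by
    have := Real.sinh_le_sinh.mpr hy
    simpa using this
  exact div_nonneg this (Real.cosh_pos y).le

lemma hgf_key_alg (C T μ s : ℝ) (hCpos : 0 < C) (haT : 0 < 1 + μ * T)
    (hCT : C ^ 2 * (1 - T ^ 2) = 1) :
    1 - μ ^ 2 / (2 * C ^ 2 * (1 + μ * T)) - (1 / 2 + (μ / 2) * T) * (1 + s)
        = ((1 - μ ^ 2) - s * (1 + μ * T) ^ 2) / (2 * (1 + μ * T)) := by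
  have hC0 : C ≠ 0 := ne_of_gt hCpos
  have hA0 : (1 + μ * T) ≠ 0 := ne_of_gt haT
  field_simp
  linear_combination μ^2 * hCT

/-- Nonnegativity of solution (3-18) in the domain Ω_κ. -/
theorem hgf_solution_3_18_nonneg
    (d1 d2 : ℝ) (hd2 : 0 < d2) (hd12 : d2 < d1)
    (κ : ℝ) (hκ : κ = Real.sqrt (2 / (d1 - d2)))
    (β1 β2 : ℝ) (hβ1 : β1 < 1) (hβ12 : β2 < β1) (hβ2 : 0 < β2)
    (μ : ℝ) (hμ : μ = Real.sqrt (1 - β1))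
    (u v w : ℝ → ℝ → ℝ)
    (hu : ∀ t x : ℝ, u t x = (1 / 2 + (μ / 2) * Real.tanh (μ * t / 2))
        * (1 + β2 * Real.sin (κ * x) * Real.exp (-d1 * κ ^ 2 * t)))
    (hv : ∀ t x : ℝ, v t x = 1 - (1 - β1)
        / (2 * (Real.cosh (μ * t / 2)) ^ 2 * (1 + μ * Real.tanh (μ * t / 2))) - u t x)
    (hw : ∀ t x : ℝ, w t x = β2 * Real.sin (κ * x) * Real.exp (-d1 * κ ^ 2 * t)
        * (1 + μ * Real.tanh (μ * t / 2))) :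
    ∀ k : ℤ, ∀ t x : ℝ, 0 < t →
      x ∈ Set.Ioo ((2 * (k : ℝ) * π) / κ) ((2 * (k : ℝ) + 1) * π / κ) →
      u t x ≥ 0 ∧ v t x ≥ 0 ∧ w t x ≥ 0 := by
  intro k t x ht hx
  have hd : 0 < d1 - d2 := by linarith
  have hβ1pos : 0 < β1 := lt_trans hβ2 hβ12
  have h1β1 : 0 < 1 - β1 := by linarith
  have hμpos : 0 < μ := hμ ▸ Real.sqrt_pos.mpr h1β1
  have hμsq : μ ^ 2 = 1 - β1 := by rw [hμ, Real.sq_sqrt h1β1.le]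
  have hμlt : μ < 1 := by nlinarith [sq_nonneg (μ - 1), hμsq, hβ1pos, hμpos]
  have hκpos : 0 < κ := by
    rw [hκ]; exact Real.sqrt_pos.mpr (by positivity)
  have hκsq : κ ^ 2 = 2 / (d1 - d2) := by
    rw [hκ, Real.sq_sqrt (by positivity : (0:ℝ) ≤ 2 / (d1 - d2))]
  have hd1κ : 2 ≤ d1 * κ ^ 2 := by
    rw [hκsq, ← mul_div_assoc, le_div_iff₀ hd]
    linarith
  -- sin(κ x) > 0
  have hsin : 0 < Real.sin (κ * x) := by
    obtain ⟨hx1, hx2⟩ := hx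
    have h1 : 2 * (k:ℝ) * π < κ * x := by
      rw [div_lt_iff₀ hκpos] at hx1; linarith [hx1]
    have h2 : κ * x < (2 * (k:ℝ) + 1) * π := by
      rw [lt_div_iff₀ hκpos] at hx2; linarith [hx2]
    have : Real.sin (κ * x) = Real.sin (κ * x - k * (2 * π)) := by
      rw [← Real.sin_add_int_mul_two_pi (κ * x - k * (2*π)) k]; ring_nf
    rw [this]
    apply Real.sin_pos_of_pos_of_lt_pi <;> linarith
  set T := Real.tanh (μ * t / 2) with hT
  set E := Real.exp (-d1 * κ ^ 2 * t) with hE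
  have hEpos : 0 < E := Real.exp_pos _
  have hTnn : 0 ≤ T := tanh_nonneg_aux (by positivity)
  have haT : 0 < 1 + μ * T := by
    have := mul_nonneg hμpos.le hTnn
    linarith
  have hsin1 : Real.sin (κ * x) ≤ 1 := Real.sin_le_one _
  have hfac : 0 < 1 + β2 * Real.sin (κ * x) * E := by positivity
  refine ⟨?_, ?_, ?_⟩
  · rw [hu]
    have : 0 < 1 / 2 + (μ / 2) * T := by positivity
    positivity
  · -- v ≥ 0
    rw [hv t x, hu t x]
    set C := Real.cosh (μ * t / 2) with hC
    have hCpos : 0 < C := Real.cosh_pos _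
    have hCT : C ^ 2 * (1 - T ^ 2) = 1 := by
      have hTdef : T = Real.sinh (μ * t / 2) / C := Real.tanh_eq_sinh_div_cosh _
      have hcs := Real.cosh_sq_sub_sinh_sq (μ * t / 2)
      rw [hTdef]
      field_simp
      linarith [hcs]
    set s := β2 * Real.sin (κ * x) * E with hs
    have hspos : 0 < s := by positivity
    have hβ1eq : (1 : ℝ) - β1 = μ ^ 2 := hμsq.symm
    rw [hβ1eq]
    rw [hgf_key_alg C T μ s hCpos haT hCT]
    apply div_nonneg _ (by linarith)
    -- numerator nonneg: s * (1+μT)^2 ≤ 1 - μ^2 = β1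
    have hTle : T ≤ (Real.exp (μ * t) - 1) / 2 := by
      have h := tanh_le_aux (y := μ * t / 2) (by positivity)
      have h2y : 2 * (μ * t / 2) = μ * t := by ring
      rw [h2y] at h
      exact h
    have hexp_le : Real.exp (μ * t) ≤ Real.exp t := by
      exact Real.exp_le_exp.mpr (mul_le_of_le_one_left ht.le hμlt.le)
    have hone : 1 + μ * T ≤ Real.exp t := by
      have h1 : μ * T ≤ (Real.exp (μ * t) - 1) / 2 := by
        have hE1 : 1 ≤ Real.exp (μ * t) := Real.one_le_exp (by positivity)
        have hmt : μ * T ≤ T := mul_le_of_le_one_left hTnn hμlt.le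
        linarith
      have h2 : (Real.exp t + 1) / 2 ≤ Real.exp t := by
        have := Real.one_le_exp (le_of_lt ht); linarith
      linarith
    have hsq : (1 + μ * T) ^ 2 ≤ Real.exp t * Real.exp t := by
      have h := pow_le_pow_left₀ haT.le hone 2
      calc (1 + μ * T) ^ 2 ≤ (Real.exp t) ^ 2 := h
        _ = Real.exp t * Real.exp t := sq (Real.exp t)
    have hEbound : E ≤ Real.exp (-(2 * t)) := by
      rw [hE]
      apply Real.exp_le_exp.mpr
      have h := mul_le_mul_of_nonneg_right hd1κ ht.le
      nlinarith [h]
    have hkey : E * (1 + μ * T) ^ 2 ≤ 1 := by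
      calc E * (1 + μ * T) ^ 2 ≤ Real.exp (-(2*t)) * (Real.exp t * Real.exp t) := by
            apply mul_le_mul hEbound hsq (by positivity) (Real.exp_pos _).le
        _ = 1 := by rw [← Real.exp_add, ← Real.exp_add, show -(2*t) + (t+t) = 0 by ring, Real.exp_zero]
    have hfin : s * (1 + μ * T) ^ 2 ≤ β2 := by
      have h1 : s * (1 + μ * T) ^ 2 = β2 * Real.sin (κ * x) * (E * (1 + μ * T) ^ 2) := by
        rw [hs]; ring
      rw [h1]
      calc β2 * Real.sin (κ * x) * (E * (1 + μ * T) ^ 2)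
          ≤ β2 * Real.sin (κ * x) * 1 := by
            apply mul_le_mul_of_nonneg_left hkey (by positivity)
        _ ≤ β2 := by
            have h := mul_le_of_le_one_right hβ2.le hsin1
            linarith
    linarith [hfin, hβ12, hμsq]
  · rw [hw]; positivity
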